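/- Fix an integer P ≥ 2. Let f, g ∈ ℂ[u,s,t] be homogeneous of degrees 8 and 12, respectively, in the variables (s,t). Assume every monomial u^μ s^σ t^{8−σ} of f with σ < 4 has μ ≥ P·(4−σ), and every monomial u^μ s^σ t^{12−σ} of g with σ < 6 has μ ≥ P·(6−σ). Let A be the coefficient of u⁰s⁴t⁴ in f, B the coefficient of u⁰s⁶t⁶ in g, and Δ := 4f³ + 27g². Then: (i) every monomial u^μ s^σ t^{24−σ} of Δ with σ < 12 has μ ≥ P·(12−σ); (ii) the coefficient of u⁰s¹²t¹² in Δ equals 4A³ + 27B²; and (iii) if Δ ≠ 0, then min{μ+σ over the monomials of Δ} = 12 when 4A³ + 27B² ≠ 0, while min{μ+σ over the monomials of Δ} ≥ 13 when 4A³ + 27B² = 0. -/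

import Mathlib

open MvPolynomial

noncomputable def mono3 (μ σ τ : ℕ) : Fin 3 →₀ ℕ :=
  Finsupp.equivFunOnFinite.symm ![μ, σ, τ]

/-- If the target monomial decomposes uniquely, the coefficient of a product factors. -/
lemma coeff_mul_unique (p q : MvPolynomial (Fin 3) ℂ) (m₁ m₂ : Fin 3 →₀ ℕ)
    (h : ∀ a ∈ p.support, ∀ b ∈ q.support, a + b = m₁ + m₂ → a = m₁ ∧ b = m₂) :
    MvPolynomial.coeff (m₁ + m₂) (p * q) =
      MvPolynomial.coeff m₁ p * MvPolynomial.coeff m₂ q := by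
  rw [coeff_mul]
  refine Finset.sum_eq_single (m₁, m₂) ?_ ?_
  · rintro ⟨a, b⟩ hab hne
    rw [Finset.HasAntidiagonal.mem_antidiagonal] at hab
    rcases eq_or_ne (coeff a p) 0 with h0 | h0
    · simp [h0]
    rcases eq_or_ne (coeff b q) 0 with h1 | h1
    · simp [h1]
    obtain ⟨ea, eb⟩ := h a (mem_support_iff.mpr h0) b (mem_support_iff.mpr h1) hab
    subst ea; subst eb
    exact absurd rfl hne
  · intro hn
    rw [Finset.HasAntidiagonal.mem_antidiagonal] at hn
    exact absurd rfl hn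

theorem stmt_5 (P : ℕ) (hP : 2 ≤ P)
    (f g : MvPolynomial (Fin 3) ℂ)
    (hfhom : ∀ d ∈ f.support, d 1 + d 2 = 8)
    (hghom : ∀ d ∈ g.support, d 1 + d 2 = 12)
    (hf : ∀ d ∈ f.support, d 1 < 4 → P * (4 - d 1) ≤ d 0)
    (hg : ∀ d ∈ g.support, d 1 < 6 → P * (6 - d 1) ≤ d 0)
    (A B : ℂ)
    (hA : A = MvPolynomial.coeff (mono3 0 4 4) f)
    (hB : B = MvPolynomial.coeff (mono3 0 6 6) g)
    (Δ : MvPolynomial (Fin 3) ℂ)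
    (hΔ : Δ = 4 * f ^ 3 + 27 * g ^ 2) :
    (∀ d ∈ Δ.support, d 1 < 12 → P * (12 - d 1) ≤ d 0) ∧
    MvPolynomial.coeff (mono3 0 12 12) Δ = 4 * A ^ 3 + 27 * B ^ 2 ∧
    (Δ ≠ 0 →
      (4 * A ^ 3 + 27 * B ^ 2 ≠ 0 →
        (∀ d ∈ Δ.support, 12 ≤ d 0 + d 1) ∧ ∃ d ∈ Δ.support, d 0 + d 1 = 12) ∧
      (4 * A ^ 3 + 27 * B ^ 2 = 0 →
        ∀ d ∈ Δ.support, 13 ≤ d 0 + d 1)) := by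
  -- numerals as constants
  have hC4 : (4 : MvPolynomial (Fin 3) ℂ) = C (4 : ℂ) := (map_ofNat C 4).symm
  have hC27 : (27 : MvPolynomial (Fin 3) ℂ) = C (27 : ℂ) := (map_ofNat C 27).symm
  -- unconditional lower bounds on u-degree
  have hfP : ∀ a ∈ f.support, P * (4 - a 1) ≤ a 0 := by
    intro a ha
    rcases lt_or_ge (a 1) 4 with h | h
    · exact hf a ha h
    · simp [Nat.sub_eq_zero_of_le h]
  have hgP : ∀ a ∈ g.support, P * (6 - a 1) ≤ a 0 := by
    intro a ha
    rcases lt_or_ge (a 1) 6 with h | h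
    · exact hg a ha h
    · simp [Nat.sub_eq_zero_of_le h]
  -- if u-degree is 0 then s-degree is large
  have hf0 : ∀ a ∈ f.support, a 0 = 0 → 4 ≤ a 1 := by
    intro a ha h0
    by_contra hlt
    push_neg at hlt
    have h1 := hf a ha hlt
    have : 2 * 1 ≤ P * (4 - a 1) :=
      Nat.mul_le_mul hP (by omega)
    omega
  have hg0 : ∀ a ∈ g.support, a 0 = 0 → 6 ≤ a 1 := by
    intro a ha h0
    by_contra hlt
    push_neg at hlt
    have h1 := hg a ha hlt
    have : 2 * 1 ≤ P * (6 - a 1) :=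
      Nat.mul_le_mul hP (by omega)
    omega
  -- decomposition of supports
  have hf3 : ∀ d ∈ (f ^ 3).support, ∃ a ∈ f.support, ∃ b ∈ f.support, ∃ c ∈ f.support,
      a + b + c = d := by
    intro d hd
    have h3 : f ^ 3 = f * f * f := by ring
    rw [h3] at hd
    obtain ⟨ab, hab, c, hc, habc⟩ := Finset.mem_add.mp (support_mul (f * f) f hd)
    obtain ⟨a, ha, b, hb, hab'⟩ := Finset.mem_add.mp (support_mul f f hab)
    exact ⟨a, ha, b, hb, c, hc, by rw [hab']; exact habc⟩
  have hg2 : ∀ d ∈ (g ^ 2).support, ∃ a ∈ g.support, ∃ b ∈ g.support, a + b = d := by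
    intro d hd
    have h2 : g ^ 2 = g * g := by ring
    rw [h2] at hd
    exact Finset.mem_add.mp (support_mul g g hd)
  -- support of Δ splits
  have hsplit : ∀ d ∈ Δ.support, d ∈ (f ^ 3).support ∨ d ∈ (g ^ 2).support := by
    intro d hd
    by_contra hc
    push_neg at hc
    have h1 : coeff d (f ^ 3) = 0 := notMem_support_iff.mp hc.1
    have h2 : coeff d (g ^ 2) = 0 := notMem_support_iff.mp hc.2
    have : coeff d Δ = 0 := by
      rw [hΔ, coeff_add, hC4, hC27, coeff_C_mul, coeff_C_mul, h1, h2]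
      ring
    exact (mem_support_iff.mp hd) this
  -- part (i)
  have part1 : ∀ d ∈ Δ.support, d 1 < 12 → P * (12 - d 1) ≤ d 0 := by
    intro d hd _
    rcases hsplit d hd with h | h
    · obtain ⟨a, ha, b, hb, c, hc, habc⟩ := hf3 d h
      have e0 : a 0 + b 0 + c 0 = d 0 := by rw [← habc]; rfl
      have e1 : a 1 + b 1 + c 1 = d 1 := by rw [← habc]; rfl
      have la := hfP a ha
      have lb := hfP b hb
      have lc := hfP c hc
      have key : P * (12 - d 1) ≤ P * ((4 - a 1) + (4 - b 1) + (4 - c 1)) :=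
        Nat.mul_le_mul_left P (by omega)
      calc P * (12 - d 1) ≤ P * ((4 - a 1) + (4 - b 1) + (4 - c 1)) := key
        _ = P * (4 - a 1) + P * (4 - b 1) + P * (4 - c 1) := by ring
        _ ≤ a 0 + b 0 + c 0 := by omega
        _ = d 0 := e0
    · obtain ⟨a, ha, b, hb, hab⟩ := hg2 d h
      have e0 : a 0 + b 0 = d 0 := by rw [← hab]; rfl
      have e1 : a 1 + b 1 = d 1 := by rw [← hab]; rfl
      have la := hgP a ha
      have lb := hgP b hb
      have key : P * (12 - d 1) ≤ P * ((6 - a 1) + (6 - b 1)) :=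
        Nat.mul_le_mul_left P (by omega)
      calc P * (12 - d 1) ≤ P * ((6 - a 1) + (6 - b 1)) := key
        _ = P * (6 - a 1) + P * (6 - b 1) := by ring
        _ ≤ a 0 + b 0 := by omega
        _ = d 0 := e0
  -- part (ii)
  have hm44 : ∀ a ∈ f.support, a 0 = 0 → a 1 = 4 → a = mono3 0 4 4 := by
    intro a ha h0 h1
    have h2 := hfhom a ha
    ext i
    fin_cases i
    · exact h0
    · exact h1
    · show a 2 = 4; omega
  have hm66 : ∀ a ∈ g.support, a 0 = 0 → a 1 = 6 → a = mono3 0 6 6 := by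
    intro a ha h0 h1
    have h2 := hghom a ha
    ext i
    fin_cases i
    · exact h0
    · exact h1
    · show a 2 = 6; omega
  -- coeff of f^2 at (0,8,8)
  have hsum88 : mono3 0 4 4 + mono3 0 4 4 = mono3 0 8 8 := by
    ext i; fin_cases i <;> rfl
  have hf2coeff : coeff (mono3 0 8 8) (f * f) = A * A := by
    rw [← hsum88, coeff_mul_unique, ← hA]
    intro a ha b hb hab
    have e0 : a 0 + b 0 = 0 := by rw [show a 0 + b 0 = (a+b) 0 from rfl, hab, hsum88]; rfl
    have e1 : a 1 + b 1 = 8 := by rw [show a 1 + b 1 = (a+b) 1 from rfl, hab, hsum88]; rfl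
    have ka := hf0 a ha (by omega)
    have kb := hf0 b hb (by omega)
    exact ⟨hm44 a ha (by omega) (by omega), hm44 b hb (by omega) (by omega)⟩
  -- coeff of f^3 at (0,12,12)
  have hsum1212 : mono3 0 4 4 + mono3 0 8 8 = mono3 0 12 12 := by
    ext i; fin_cases i <;> rfl
  have hf3coeff : coeff (mono3 0 12 12) (f ^ 3) = A ^ 3 := by
    have h3 : f ^ 3 = f * (f * f) := by ring
    rw [h3, ← hsum1212, coeff_mul_unique, hf2coeff, ← hA]
    · ring
    intro a ha b hb hab
    obtain ⟨c, hc, e, he, hce⟩ := Finset.mem_add.mp (support_mul f f hb)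
    have e0 : a 0 + (c 0 + e 0) = 0 := by
      rw [show c 0 + e 0 = b 0 from by rw [← hce]; rfl,
        show a 0 + b 0 = (a+b) 0 from rfl, hab, hsum1212]; rfl
    have e1 : a 1 + (c 1 + e 1) = 12 := by
      rw [show c 1 + e 1 = b 1 from by rw [← hce]; rfl,
        show a 1 + b 1 = (a+b) 1 from rfl, hab, hsum1212]; rfl
    have ka := hf0 a ha (by omega)
    have kc := hf0 c hc (by omega)
    have ke := hf0 e he (by omega)
    have haeq : a = mono3 0 4 4 := hm44 a ha (by omega) (by omega)
    refine ⟨haeq, ?_⟩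
    have hb' : a + b = a + mono3 0 8 8 := by rw [hab, haeq]
    exact add_left_cancel hb'
  -- coeff of g^2 at (0,12,12)
  have hsum66 : mono3 0 6 6 + mono3 0 6 6 = mono3 0 12 12 := by
    ext i; fin_cases i <;> rfl
  have hg2coeff : coeff (mono3 0 12 12) (g ^ 2) = B ^ 2 := by
    have h2 : g ^ 2 = g * g := by ring
    rw [h2, ← hsum66, coeff_mul_unique, ← hB]
    · ring
    intro a ha b hb hab
    have e0 : a 0 + b 0 = 0 := by rw [show a 0 + b 0 = (a+b) 0 from rfl, hab, hsum66]; rfl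
    have e1 : a 1 + b 1 = 12 := by rw [show a 1 + b 1 = (a+b) 1 from rfl, hab, hsum66]; rfl
    have ka := hg0 a ha (by omega)
    have kb := hg0 b hb (by omega)
    exact ⟨hm66 a ha (by omega) (by omega), hm66 b hb (by omega) (by omega)⟩
  have part2 : coeff (mono3 0 12 12) Δ = 4 * A ^ 3 + 27 * B ^ 2 := by
    rw [hΔ, coeff_add, hC4, hC27, coeff_C_mul, coeff_C_mul, hf3coeff, hg2coeff]
  -- homogeneity of Δ in (s,t)
  have hΔhom : ∀ d ∈ Δ.support, d 1 + d 2 = 24 := by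
    intro d hd
    rcases hsplit d hd with h | h
    · obtain ⟨a, ha, b, hb, c, hc, habc⟩ := hf3 d h
      have e1 : a 1 + b 1 + c 1 = d 1 := by rw [← habc]; rfl
      have e2 : a 2 + b 2 + c 2 = d 2 := by rw [← habc]; rfl
      have := hfhom a ha; have := hfhom b hb; have := hfhom c hc
      omega
    · obtain ⟨a, ha, b, hb, hab⟩ := hg2 d h
      have e1 : a 1 + b 1 = d 1 := by rw [← hab]; rfl
      have e2 : a 2 + b 2 = d 2 := by rw [← hab]; rfl
      have := hghom a ha; have := hghom b hb
      omega
  refine ⟨part1, part2, fun _ => ⟨fun hAB => ?_, fun hAB d hd => ?_⟩⟩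
  · constructor
    · intro d hd
      rcases lt_or_ge (d 1) 12 with h | h
      · have h1 := part1 d hd h
        have h2 : 2 * (12 - d 1) ≤ P * (12 - d 1) := Nat.mul_le_mul_right _ hP
        omega
      · omega
    · refine ⟨mono3 0 12 12, ?_, rfl⟩
      rw [mem_support_iff, part2]
      exact hAB
  · rcases lt_or_ge (d 1) 12 with h | h
    · have h1 := part1 d hd h
      have h2 : 2 * (12 - d 1) ≤ P * (12 - d 1) := Nat.mul_le_mul_right _ hP
      omega
    · rcases Nat.lt_or_ge (d 1) 13 with h13 | h13
      · -- d 1 = 12; show d 0 ≥ 1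
        rcases Nat.eq_zero_or_pos (d 0) with h0 | h0
        · exfalso
          have h24 := hΔhom d hd
          have hdeq : d = mono3 0 12 12 := by
            ext i
            fin_cases i
            · exact h0
            · show d 1 = 12; omega
            · show d 2 = 12; omega
          rw [hdeq, mem_support_iff, part2] at hd
          exact hd hAB
        · omega
      · omega
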